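/- With the 0–1 loss L(x) = 1 iff all m simulated DFAs are in accepting states in program configuration x, and the transformation set consisting of the step transformation (advancing all DFAs by one symbol α ∈ Σ) and the identity: max over sequences q of length k = n^m of L(q(x₀)) equals 1 if and only if the intersection of the languages of the DFAs is nonempty, where x₀ is the initial configuration. -/

import Mathlib

open scoped Classical

private lemma dfa_short_word {α : Type*} {σ : Type*} [Fintype σ] (M : DFA α σ)
    (h : ∃ w, w ∈ M.accepts) : ∃ w, w ∈ M.accepts ∧ w.length < Fintype.card σ := by
  obtain ⟨w, hw⟩ := h
  suffices H : ∀ N (w : List α), w.length ≤ N → w ∈ M.accepts →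
      ∃ w', w' ∈ M.accepts ∧ w'.length < Fintype.card σ from
    H w.length w le_rfl hw
  intro N
  induction N with
  | zero =>
    intro w hlen hw
    have hcard : 0 < Fintype.card σ := Fintype.card_pos_iff.mpr ⟨M.start⟩
    exact ⟨w, hw, by omega⟩
  | succ N ih =>
    intro w hlen hw
    by_cases hl : w.length < Fintype.card σ
    · exact ⟨w, hw, hl⟩
    · push_neg at hl
      obtain ⟨q, a, b, c, hx, _, hb, ha, hqb, hqc⟩ :=
        M.evalFrom_split (s := M.start) (t := M.eval w) hl rfl
      have hac : (a ++ c) ∈ M.accepts := by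
        rw [DFA.mem_accepts] at hw ⊢
        rwa [DFA.eval, DFA.evalFrom_of_append, ha, hqc]
      have hbl : 0 < b.length := List.length_pos_iff.mpr hb
      have hlt : (a ++ c).length ≤ N := by
        have := congrArg List.length hx
        simp only [List.length_append] at this ⊢
        omega
      exact ih (a ++ c) hlt hac

/-- The reduction from DFA-intersection nonemptiness to loss maximization: with a 0–1 loss
that is 1 exactly on accepting configurations, and transformations consisting of
simultaneous one-symbol steps and the identity, the maximal loss over sequences of length
n^m is 1 iff the intersection of the languages is nonempty. -/
theorem loss_max_iff_intersection_nonempty {α : Type*} {m n : ℕ} {σ : Fin m → Type*}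
    [∀ i, Fintype (σ i)] (D : ∀ i, DFA α (σ i))
    (hcard : ∀ i, Fintype.card (σ i) ≤ n) :
    (sSup {v : ℝ | ∃ q : List ((∀ i, σ i) → (∀ i, σ i)),
        q.length = n ^ m ∧
        (∀ f ∈ q, (∃ a : α, f = fun c i => (D i).step (c i) a) ∨ f = id) ∧
        v = (if (∀ i, (q.foldl (fun c f => f c) (fun i => (D i).start)) i ∈ (D i).accept)
              then (1 : ℝ) else 0)} = 1)
      ↔ ∃ w : List α, ∀ i, w ∈ (D i).accepts := by
  -- the product DFA
  set P : DFA α (∀ i, σ i) :=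
    { step := fun c a i => (D i).step (c i) a
      start := fun i => (D i).start
      accept := {c | ∀ i, c i ∈ (D i).accept} } with hP
  have hPeval : ∀ (w : List α) (c : ∀ i, σ i) (i : Fin m),
      P.evalFrom c w i = (D i).evalFrom (c i) w := by
    intro w
    induction w with
    | nil => intro c i; rfl
    | cons a w ih =>
      intro c i
      simp only [DFA.evalFrom, List.foldl_cons] at *
      exact ih _ i
  have hPacc : ∀ w : List α, w ∈ P.accepts ↔ ∀ i, w ∈ (D i).accepts := by
    intro w
    simp only [DFA.mem_accepts, DFA.eval]
    constructor
    · intro h i; have := h i; rwa [hPeval] at this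
    · intro h i; rw [hPeval]; exact h i
  have hPcard : Fintype.card (∀ i, σ i) ≤ n ^ m := by
    rw [Fintype.card_pi]
    calc ∏ i, Fintype.card (σ i) ≤ ∏ _i : Fin m, n :=
          Finset.prod_le_prod (fun _ _ => Nat.zero_le _) (fun i _ => hcard i)
      _ = n ^ m := by simp
  set S : Set ℝ := {v : ℝ | ∃ q : List ((∀ i, σ i) → (∀ i, σ i)),
        q.length = n ^ m ∧
        (∀ f ∈ q, (∃ a : α, f = fun c i => (D i).step (c i) a) ∨ f = id) ∧
        v = (if (∀ i, (q.foldl (fun c f => f c) (fun i => (D i).start)) i ∈ (D i).accept)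
              then (1 : ℝ) else 0)} with hS
  have hsub : S ⊆ {0, 1} := by
    rintro v ⟨q, _, _, rfl⟩
    split <;> simp
  have hbdd : BddAbove S := (((Set.finite_singleton (1:ℝ)).insert 0).bddAbove).mono hsub
  constructor
  · -- max = 1 → intersection nonempty
    intro hsup
    have h1 : (1 : ℝ) ∈ S := by
      by_contra h1
      have : S ⊆ {0} := by
        intro v hv
        rcases hsub hv with h | h
        · exact h
        · exact absurd (h ▸ hv) h1
      have hle : sSup S ≤ 0 := Real.sSup_le (fun v hv => le_of_eq (this hv)) le_rfl
      rw [hsup] at hle; linarith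
    obtain ⟨q, hqlen, hqmem, hqval⟩ := h1
    have hacc : ∀ i, (q.foldl (fun c f => f c) (fun i => (D i).start)) i ∈ (D i).accept := by
      by_contra h
      rw [if_neg h] at hqval
      norm_num at hqval
    -- extract word from q
    clear hqval hqlen
    suffices H : ∀ (q : List ((∀ i, σ i) → (∀ i, σ i))) (c : ∀ i, σ i),
        (∀ f ∈ q, (∃ a : α, f = fun c i => (D i).step (c i) a) ∨ f = id) →
        ∃ w : List α, P.evalFrom c w = q.foldl (fun c f => f c) c by
      obtain ⟨w, hw⟩ := H q (fun i => (D i).start) hqmem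
      refine ⟨w, fun i => ?_⟩
      rw [DFA.mem_accepts, DFA.eval]
      have := congrFun hw i
      rw [hPeval] at this
      rw [this]
      exact hacc i
    intro q
    induction q with
    | nil => exact fun c _ => ⟨[], rfl⟩
    | cons f q ih =>
      intro c hmem
      rcases hmem f List.mem_cons_self with ⟨a, rfl⟩ | rfl
      · obtain ⟨w, hw⟩ := ih (fun i => (D i).step (c i) a)
          (fun g hg => hmem g (List.mem_cons_of_mem _ hg))
        exact ⟨a :: w, hw⟩
      · obtain ⟨w, hw⟩ := ih c (fun g hg => hmem g (List.mem_cons_of_mem _ hg))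
        exact ⟨w, hw⟩
  · -- intersection nonempty → max = 1
    rintro ⟨w, hw⟩
    obtain ⟨w', hw', hw'len⟩ := dfa_short_word P ⟨w, (hPacc w).mpr hw⟩
    have hlen : w'.length ≤ n ^ m := by omega
    -- build the sequence: steps for w', then identities
    set q : List ((∀ i, σ i) → (∀ i, σ i)) :=
      (w'.map (fun a c i => (D i).step (c i) a)) ++
        List.replicate (n ^ m - w'.length) id with hq
    have hfold : ∀ (l : List α) (c : ∀ i, σ i),
        (l.map (fun a c i => (D i).step (c i) a)).foldl (fun c f => f c) c
          = P.evalFrom c l := by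
      intro l
      induction l with
      | nil => intro c; rfl
      | cons a l ih => intro c; simp only [List.map_cons, List.foldl_cons]; exact ih _
    have hfoldid : ∀ (k : ℕ) (c : ∀ i, σ i),
        (List.replicate k (id : (∀ i, σ i) → (∀ i, σ i))).foldl (fun c f => f c) c = c := by
      intro k
      induction k with
      | zero => intro c; rfl
      | succ k ih => intro c; simp only [List.replicate_succ, List.foldl_cons]; exact ih c
    have hfoldq : q.foldl (fun c f => f c) (fun i => (D i).start) = P.eval w' := by
      rw [hq, List.foldl_append, hfold, hfoldid]; rfl
    have h1 : (1 : ℝ) ∈ S := by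
      refine ⟨q, ?_, ?_, ?_⟩
      · simp [hq, List.length_append, List.length_map, List.length_replicate]; omega
      · intro f hf
        rw [hq, List.mem_append] at hf
        rcases hf with hf | hf
        · obtain ⟨a, _, rfl⟩ := List.mem_map.mp hf
          exact Or.inl ⟨a, rfl⟩
        · exact Or.inr (List.eq_of_mem_replicate hf)
      · rw [if_pos]
        intro i
        rw [hfoldq]
        have h2 := hw'
        rw [DFA.mem_accepts] at h2
        exact h2 i
    apply le_antisymm
    · refine Real.sSup_le (fun v hv => ?_) zero_le_one
      rcases hsub hv with h | h
      · simp [h]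
      · simp only [Set.mem_singleton_iff] at h; simp [h]
    · exact le_csSup hbdd h1
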